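/- Key flipping inequality: under the GQSS assumptions (A ≥ 0 entrywise, W, A symmetric, W ∘ A = 0), suppose x ∈ {0,1}ⁿ satisfies x_p = x_q = 1 for some p ≠ q with A_{pq} ≠ 0, and let x̃ be x with coordinate p set to 0. Then for L(λ,x) = xᵀWx − λ·xᵀAx, one has L(λ, x̃) ≥ L(λ, x) − W_{pp} − 2 Σ_{j ∉ N(p), j ≠ p} W_{pj} x_j + 2λ A_{pq}, where N(p) = {j ≠ p : A_{pj} ≠ 0}. -/

import Mathlib

open Matrix

lemma quad_update_aux (n : ℕ) (M : Matrix (Fin n) (Fin n) ℝ) (hM : M.IsSymm)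
    (x : Fin n → ℝ) (p : Fin n) (hxp : x p = 1) :
    (Function.update x p 0) ⬝ᵥ M.mulVec (Function.update x p 0)
      = x ⬝ᵥ M.mulVec x - 2 * (∑ j, M p j * x j) + M p p := by
  have hy : Function.update x p 0 = x - Pi.single p 1 := by
    funext i
    by_cases h : i = p
    · subst h; simp [hxp]
    · simp [Function.update_of_ne h, Pi.single_eq_of_ne h]
  have hsym : ∀ i j, M j i = M i j := fun i j => by
    exact hM.apply i j
  rw [hy]
  rw [Matrix.mulVec_sub, sub_dotProduct, dotProduct_sub, dotProduct_sub]
  have h1 : Pi.single p (1:ℝ) ⬝ᵥ M.mulVec x = ∑ j, M p j * x j := by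
    rw [single_dotProduct]
    simp [Matrix.mulVec, dotProduct]
  have h2 : x ⬝ᵥ M.mulVec (Pi.single p 1) = ∑ j, M p j * x j := by
    rw [Matrix.mulVec_single]
    simp only [dotProduct, mul_one]
    exact Finset.sum_congr rfl fun j _ => by simp [hsym p j, mul_comm]
  have h3 : Pi.single p (1:ℝ) ⬝ᵥ M.mulVec (Pi.single p 1) = M p p := by
    rw [Matrix.mulVec_single, single_dotProduct]
    simp
  rw [h1, h2, h3]; ring

theorem stmt_7 (n : ℕ) (W A : Matrix (Fin n) (Fin n) ℝ)
    (hWsymm : W.IsSymm) (hAsymm : A.IsSymm)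
    (hA : ∀ i j, 0 ≤ A i j)
    (hWA : ∀ i j, A i j ≠ 0 → W i j = 0)
    (lam : ℝ) (hlam : 0 ≤ lam)
    (x : Fin n → ℝ) (hx : ∀ i, x i = 0 ∨ x i = 1)
    (p q : Fin n) (hpq : p ≠ q) (hApq : A p q ≠ 0)
    (hxp : x p = 1) (hxq : x q = 1) :
    (Function.update x p 0) ⬝ᵥ W.mulVec (Function.update x p 0) -
      lam * ((Function.update x p 0) ⬝ᵥ A.mulVec (Function.update x p 0)) ≥
    (x ⬝ᵥ W.mulVec x - lam * (x ⬝ᵥ A.mulVec x)) - W p p -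
      2 * (∑ j ∈ Finset.univ.filter (fun j => j ≠ p ∧ A p j = 0), W p j * x j) +
      2 * lam * A p q := by
  rw [quad_update_aux n W hWsymm x p hxp, quad_update_aux n A hAsymm x p hxp]
  -- W sum equals filtered sum
  have hWsum : (∑ j, W p j * x j) =
      W p p + ∑ j ∈ Finset.univ.filter (fun j => j ≠ p ∧ A p j = 0), W p j * x j := by
    rw [← Finset.sum_filter_add_sum_filter_not Finset.univ (fun j => j = p)]
    congr 1
    · rw [Finset.sum_filter]
      rw [Finset.sum_eq_single p]
      · simp [hxp]
      · intro b _ hb; simp [hb]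
      · simp
    · rw [← Finset.sum_filter_add_sum_filter_not
        (Finset.univ.filter (fun j => ¬ j = p)) (fun j => A p j = 0)]
      have : ∑ j ∈ (Finset.univ.filter (fun j => ¬ j = p)).filter (fun j => ¬ A p j = 0),
          W p j * x j = 0 := by
        apply Finset.sum_eq_zero
        intro j hj
        simp only [Finset.mem_filter] at hj
        rw [hWA p j hj.2]; ring
      rw [this, add_zero]
      congr 1
      ext j
      simp [Finset.mem_filter, and_comm]
  -- A sum lower bound
  have hAsum : A p p + A p q ≤ ∑ j, A p j * x j := by
    have hsub : ({p, q} : Finset (Fin n)) ⊆ Finset.univ := Finset.subset_univ _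
    have := Finset.sum_le_sum_of_subset_of_nonneg hsub
      (f := fun j => A p j * x j)
      (fun j _ _ => by rcases hx j with h | h <;> simp [h]; exact hA p j)
    rwa [Finset.sum_pair hpq, hxp, hxq, mul_one, mul_one] at this
  have hlA : lam * (A p p + A p q) ≤ lam * ∑ j, A p j * x j :=
    mul_le_mul_of_nonneg_left hAsum hlam
  nlinarith [hlA, mul_nonneg hlam (hA p p)]
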